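/- Let n ≥ 1, let Φ' ⊆ A_{n−1} = {e_i − e_j : i ≠ j} be a root subsystem, let ∼ be the equivalence relation on {1,…,n} given by i ∼ j iff i = j or e_i − e_j ∈ Φ', and let b : {1,…,n} → {1,…,m} be a surjection with b(i) = b(j) if and only if i ∼ j. Define the linear maps ψ : ℝ^m → ℝ^n by ψ(x)_i = x_{b(i)} and T : ℝ^n → ℝ^m by (Tv)_k = Σ_{i : b(i)=k} v_i. Then: (i) the image of ψ equals Ker(Φ') := {v ∈ ℝ^n : ⟨α,v⟩ = 0 for all α ∈ Φ'}; (ii) T(e_i − e_j) = e_{b(i)} − e_{b(j)} for all i, j, and the image T(A_{n−1} ∖ Φ') equals A_{m−1} = {e_k − e_l : k ≠ l in {1,…,m}}; (iii) for any root subsystem Φ with Φ' ⊆ Φ ⊆ A_{n−1}, the set T(Φ ∖ Φ') is a root subsystem of A_{m−1}. -/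

import Mathlib

open Finset

noncomputable section

/-- Standard basis vector `e i` of `ℝ^n`. -/
def E {n : ℕ} (i : Fin n) : Fin n → ℝ := Pi.single i 1

/-- Standard inner product on `ℝ^n`. -/
def dot {n : ℕ} (v w : Fin n → ℝ) : ℝ := ∑ i, v i * w i

/-- Reflection across the hyperplane orthogonal to `α`. -/
def reflRoot {n : ℕ} (α v : Fin n → ℝ) : Fin n → ℝ := v - (2 * dot v α / dot α α) • α

/-- The root system `A_{n-1}`. -/
def Aset (n : ℕ) : Set (Fin n → ℝ) := {α | ∃ i j : Fin n, i ≠ j ∧ α = E i - E j}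

/-- The root system `D_n`. -/
def Dset (n : ℕ) : Set (Fin n → ℝ) :=
  {α | ∃ i j : Fin n, i ≠ j ∧ (α = E i - E j ∨ α = E i + E j ∨ α = -(E i + E j))}

/-- The root system `B_n`. -/
def Bset (n : ℕ) : Set (Fin n → ℝ) := Dset n ∪ {α | ∃ i : Fin n, α = E i ∨ α = -E i}

/-- The root system `C_n`. -/
def Cset (n : ℕ) : Set (Fin n → ℝ) :=
  Dset n ∪ {α | ∃ i : Fin n, α = (2:ℝ) • E i ∨ α = -((2:ℝ) • E i)}

/-- The nonreduced root system `BC_n`. -/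
def BCset (n : ℕ) : Set (Fin n → ℝ) := Bset n ∪ Cset n

/-- The transpose of the parametrization of `Ker Φ'` by the blocks:
`(Tmap b v) k = ∑_{i : b i = k} v i`. -/
def Tmap {n m : ℕ} (b : Fin n → Fin m) (v : Fin n → ℝ) : Fin m → ℝ :=
  fun k => ∑ i ∈ Finset.univ.filter (fun i => b i = k), v i

lemma dot_E_sub {n : ℕ} (i j : Fin n) (v : Fin n → ℝ) : dot (E i - E j) v = v i - v j := by
  simp [dot, E, sub_mul, Finset.sum_sub_distrib, Pi.single_apply, ite_mul]

lemma dot_E_sub' {n : ℕ} (i j : Fin n) (v : Fin n → ℝ) : dot v (E i - E j) = v i - v j := by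
  rw [show dot v (E i - E j) = dot (E i - E j) v by simp [dot, mul_comm], dot_E_sub]

lemma E_apply {n : ℕ} (i j : Fin n) : E i j = if j = i then 1 else 0 := by
  simp [E, Pi.single_apply]

lemma Tmap_E_sub {n m : ℕ} (b : Fin n → Fin m) (i j : Fin n) :
    Tmap b (E i - E j) = E (b i) - E (b j) := by
  funext k
  simp only [Tmap, E, Pi.sub_apply, Pi.single_apply, Finset.sum_sub_distrib,
    Finset.sum_filter, Finset.sum_ite_eq, Finset.mem_univ, if_true]
  congr 1
  · rw [Finset.sum_eq_single i] <;> aesop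
  · rw [Finset.sum_eq_single j] <;> aesop

lemma E_sub_inj {n : ℕ} {i j u v : Fin n} (hij : i ≠ j) (huv : u ≠ v)
    (h : E i - E j = E u - E v) : i = u ∧ j = v := by
  have h1 := congrFun h i
  have h2 := congrFun h v
  simp only [E, Pi.sub_apply, Pi.single_apply] at h1 h2
  split_ifs at h1 h2 <;> first | (exact ⟨by omega, by omega⟩) | (exfalso; revert h1 h2; norm_num)

lemma refl_formula {n : ℕ} {p q : Fin n} (hpq : p ≠ q) (r s : Fin n) :
    reflRoot (E p - E q) (E r - E s) =
      E (if r = p then q else if r = q then p else r) -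
      E (if s = p then q else if s = q then p else s) := by
  have hαα : dot (E p - E q) (E p - E q) = 2 := by
    rw [dot_E_sub]
    simp [E_apply, hpq, hpq.symm]
    norm_num
  have hβα : dot (E r - E s) (E p - E q) =
      (if r = p then 1 else 0) - (if s = p then 1 else 0)
      - (if r = q then 1 else 0) + (if s = q then 1 else 0) := by
    rw [dot_E_sub']
    simp only [Pi.sub_apply, E_apply, eq_comm (a := p), eq_comm (a := q)]
    ring
  unfold reflRoot
  rw [hαα, hβα]
  funext a
  have hpq' : ¬ p = q := hpq
  by_cases h1 : r = p <;> by_cases h2 : r = q <;> by_cases h3 : s = p <;> by_cases h4 : s = q <;>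
    simp_all only [if_true, if_false, Pi.sub_apply, Pi.smul_apply, smul_eq_mul, E_apply] <;>
    split_ifs <;> simp_all

lemma swap_ne {N : ℕ} {p q r s : Fin N} (hpq : p ≠ q) (hrs : r ≠ s) :
    (if r = p then q else if r = q then p else r) ≠
    (if s = p then q else if s = q then p else s) := by
  split_ifs <;> simp_all [Ne.symm]

/-- Quotients of `A_{n-1}` modulo a root subsystem are of type `A`. -/
theorem stmt3 (n m : ℕ) (hn : 1 ≤ n) (Φ' : Set (Fin n → ℝ)) (hsub : Φ' ⊆ Aset n)
    (hcl : ∀ α ∈ Φ', ∀ β ∈ Φ', reflRoot α β ∈ Φ')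
    (b : Fin n → Fin m) (hb : Function.Surjective b)
    (hbiff : ∀ i j : Fin n, b i = b j ↔ (i = j ∨ E i - E j ∈ Φ')) :
    (Set.range (fun x : Fin m → ℝ => fun i => x (b i)) =
        {v : Fin n → ℝ | ∀ α ∈ Φ', dot α v = 0}) ∧
    (∀ i j : Fin n, Tmap b (E i - E j) = E (b i) - E (b j)) ∧
    (Tmap b '' (Aset n \ Φ') = Aset m) ∧
    (∀ Φ : Set (Fin n → ℝ), Φ' ⊆ Φ → Φ ⊆ Aset n →
      (∀ α ∈ Φ, ∀ β ∈ Φ, reflRoot α β ∈ Φ) →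
      (Tmap b '' (Φ \ Φ') ⊆ Aset m ∧
       ∀ α ∈ Tmap b '' (Φ \ Φ'), ∀ β ∈ Tmap b '' (Φ \ Φ'),
         reflRoot α β ∈ Tmap b '' (Φ \ Φ'))) := by
  -- elements of Φ' have equal block indices
  have hmem : ∀ {i j : Fin n}, E i - E j ∈ Φ' → b i = b j := fun {i j} h =>
    (hbiff i j).mpr (Or.inr h)
  -- a vector E i - E j with distinct blocks is not in Φ'
  have hnotin : ∀ {i j : Fin n}, i ≠ j → b i ≠ b j → E i - E j ∉ Φ' := by
    intro i j hij hb' h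
    obtain ⟨u, v, huv, heq⟩ := hsub h
    obtain ⟨rfl, rfl⟩ := E_sub_inj hij huv heq
    exact hb' (hmem h)
  refine ⟨?_, fun i j => Tmap_E_sub b i j, ?_, ?_⟩
  · -- Part 1
    ext v
    constructor
    · rintro ⟨x, rfl⟩ α hα
      obtain ⟨i, j, hij, rfl⟩ := hsub hα
      rw [dot_E_sub]
      simp [hmem hα]
    · intro hv
      refine ⟨fun k => v (hb k).choose, ?_⟩
      funext i
      have hspec : b (hb (b i)).choose = b i := (hb (b i)).choose_spec
      show v (hb (b i)).choose = v i
      rcases (hbiff _ _).mp hspec with h | h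
      · rw [h]
      · have := hv _ h
        rw [dot_E_sub] at this
        exact sub_eq_zero.mp this
  · -- Part 3
    ext γ
    constructor
    · rintro ⟨α, ⟨hαA, hα'⟩, rfl⟩
      obtain ⟨i, j, hij, rfl⟩ := hαA
      rw [Tmap_E_sub]
      refine ⟨b i, b j, ?_, rfl⟩
      intro h
      rcases (hbiff i j).mp h with h' | h'
      · exact hij h'
      · exact hα' h'
    · rintro ⟨k, l, hkl, rfl⟩
      obtain ⟨i, rfl⟩ := hb k
      obtain ⟨j, rfl⟩ := hb l
      have hij : i ≠ j := fun h => hkl (h ▸ rfl)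
      exact ⟨E i - E j, ⟨⟨i, j, hij, rfl⟩, hnotin hij hkl⟩, Tmap_E_sub b i j⟩
  · -- Part 4
    intro Φ hΦ'Φ hΦA hclΦ
    have key : ∀ α ∈ Φ \ Φ', ∃ i j : Fin n, i ≠ j ∧ b i ≠ b j ∧ α = E i - E j := by
      rintro α ⟨hα, hα'⟩
      obtain ⟨i, j, hij, rfl⟩ := hΦA hα
      refine ⟨i, j, hij, ?_, rfl⟩
      intro h
      rcases (hbiff i j).mp h with h' | h'
      · exact hij h'
      · exact hα' h'
    constructor
    · rintro γ ⟨α, hα, rfl⟩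
      obtain ⟨i, j, hij, hbij, rfl⟩ := key α hα
      rw [Tmap_E_sub]
      exact ⟨b i, b j, hbij, rfl⟩
    · -- closure of the image
      -- transport lemma: change the first index within its block
      have move1 : ∀ {a a' c : Fin n}, E a - E c ∈ Φ → b a' = b a → b a ≠ b c →
          E a' - E c ∈ Φ := by
        intro a a' c h1 h2 h3
        by_cases haa : a' = a
        · rwa [haa]
        · have h2' : E a' - E a ∈ Φ := hΦ'Φ (((hbiff a' a).mp h2).resolve_left haa)
          have := hclΦ _ h2' _ h1
          rw [refl_formula haa a c] at this
          have hca' : ¬ c = a' := fun h => h3 (by rw [h, h2])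
          have hca : ¬ c = a := fun h => h3 (congrArg b h).symm
          simpa [haa, Ne.symm haa, hca', hca] using this
      have move2 : ∀ {a c c' : Fin n}, E a - E c ∈ Φ → b c' = b c → b a ≠ b c →
          E a - E c' ∈ Φ := by
        intro a c c' h1 h2 h3
        by_cases hcc : c' = c
        · rwa [hcc]
        · have h2' : E c' - E c ∈ Φ := hΦ'Φ (((hbiff c' c).mp h2).resolve_left hcc)
          have := hclΦ _ h2' _ h1
          rw [refl_formula hcc a c] at this
          have hac' : ¬ a = c' := fun h => h3 (by rw [h, h2])
          have hac : ¬ a = c := fun h => h3 (congrArg b h)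
          have hcc' : ¬ c = c' := fun h => hcc h.symm
          simpa [hcc, hcc', hac', hac] using this
      rintro γ₁ ⟨α, hα, rfl⟩ γ₂ ⟨β, hβ, rfl⟩
      obtain ⟨i, j, hij, hbij, rfl⟩ := key α hα
      obtain ⟨k, l, hkl, hbkl, rfl⟩ := key β hβ
      rw [Tmap_E_sub, Tmap_E_sub, refl_formula hbij (b k) (b l)]
      -- representatives of the blocks of k and l adapted to i, j
      set k' : Fin n := if b k = b i then i else if b k = b j then j else k with hk'
      set l' : Fin n := if b l = b i then i else if b l = b j then j else l with hl'
      have hbk' : b k' = b k := by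
        rw [hk']; split_ifs with h1 h2
        · exact h1.symm
        · exact h2.symm
        · rfl
      have hbl' : b l' = b l := by
        rw [hl']; split_ifs with h1 h2
        · exact h1.symm
        · exact h2.symm
        · rfl
      have hβ' : E k' - E l' ∈ Φ :=
        move2 (move1 hβ.1 hbk' hbkl) hbl' (hbk' ▸ hbkl)
      have hk'l' : k' ≠ l' := fun h => (hbk' ▸ hbl' ▸ hbkl) (congrArg b h)
      -- reflect in ℝ^n
      have hγ : reflRoot (E i - E j) (E k' - E l') ∈ Φ := hclΦ _ hα.1 _ hβ'
      rw [refl_formula hij k' l'] at hγ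
      set k'' : Fin n := if k' = i then j else if k' = j then i else k' with hk''
      set l'' : Fin n := if l' = i then j else if l' = j then i else l' with hl''
      have hbk'' : b k'' = if b k = b i then b j else if b k = b j then b i else b k := by
        rw [hk'', hk']
        by_cases h1 : b k = b i
        · rw [if_pos h1, if_pos h1, if_pos rfl]
        · by_cases h2 : b k = b j
          · rw [if_neg h1, if_pos h2, if_neg h1, if_pos h2, if_neg (Ne.symm hij), if_pos rfl]
          · have hki : ¬ k = i := fun h => h1 (congrArg b h)
            have hkj : ¬ k = j := fun h => h2 (congrArg b h)
            rw [if_neg h1, if_neg h2, if_neg h1, if_neg h2, if_neg hki, if_neg hkj]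
      have hbl'' : b l'' = if b l = b i then b j else if b l = b j then b i else b l := by
        rw [hl'', hl']
        by_cases h1 : b l = b i
        · rw [if_pos h1, if_pos h1, if_pos rfl]
        · by_cases h2 : b l = b j
          · rw [if_neg h1, if_pos h2, if_neg h1, if_pos h2, if_neg (Ne.symm hij), if_pos rfl]
          · have hli : ¬ l = i := fun h => h1 (congrArg b h)
            have hlj : ¬ l = j := fun h => h2 (congrArg b h)
            rw [if_neg h1, if_neg h2, if_neg h1, if_neg h2, if_neg hli, if_neg hlj]
      have hRS : b k'' ≠ b l'' := by
        rw [hbk'', hbl'']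
        exact swap_ne hbij hbkl
      have hk''l'' : k'' ≠ l'' := fun h => hRS (congrArg b h)
      refine ⟨E k'' - E l'', ⟨hγ, hnotin hk''l'' hRS⟩, ?_⟩
      rw [Tmap_E_sub, hbk'', hbl'']
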